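/- Let μ₀ > 0 satisfy 7μ₀² + 59μ₀ − 500 = 0, set ω₀ = √(7μ₀), and let A₀ be the 4×4 complex matrix [[−2, 0, 0, 3], [−10/3, −μ₀, 0, 0], [0, 0, 0, 0], [10/3, 50−μ₀, 0, −5]]. Then the vector p₀ = (2μ₀ + iω₀(5+μ₀), −150 + 3μ₀, 0, −3μ₀ + 3iω₀) ∈ ℂ⁴ satisfies A₀ᵀ p₀ = −iω₀ p₀; that is, p₀ is a left eigenvector of A₀ for the eigenvalue iω₀ (an eigenvector of the transpose for −iω₀). -/
import Mathlib


open Matrix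

/-- `p₀` is a left eigenvector of the `ε = 0` Jacobian `A₀` for the
eigenvalue `iω₀`: it satisfies `A₀ᵀ p₀ = −iω₀ p₀`. -/
theorem stmt_11 (μ₀ : ℝ) (hμ : 0 < μ₀) (h : 7 * μ₀ ^ 2 + 59 * μ₀ - 500 = 0)
    (ω₀ : ℝ) (hω : ω₀ = Real.sqrt (7 * μ₀))
    (A₀ : Matrix (Fin 4) (Fin 4) ℂ)
    (hA : A₀ = !![-2, 0, 0, 3;
                  -10/3, -(μ₀ : ℂ), 0, 0;
                  0, 0, 0, 0;
                  10/3, 50 - (μ₀ : ℂ), 0, -5])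
    (p₀ : Fin 4 → ℂ)
    (hp : p₀ = ![2 * (μ₀ : ℂ) + Complex.I * (ω₀ : ℂ) * (5 + (μ₀ : ℂ)),
                 -150 + 3 * (μ₀ : ℂ), 0,
                 -3 * (μ₀ : ℂ) + 3 * Complex.I * (ω₀ : ℂ)]) :
    A₀ᵀ.mulVec p₀ = (-(Complex.I * (ω₀ : ℂ))) • p₀ := by
  have hω2 : (ω₀ : ℂ) ^ 2 = 7 * (μ₀ : ℂ) := by
    have : ω₀ ^ 2 = 7 * μ₀ := by
      rw [hω, Real.sq_sqrt (by positivity)]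
    exact_mod_cast congrArg (Complex.ofReal ·) this
  have hc : 7 * (μ₀ : ℂ) ^ 2 + 59 * (μ₀ : ℂ) - 500 = 0 := by
    exact_mod_cast congrArg (Complex.ofReal ·) h
  have hI : Complex.I ^ 2 = -1 := Complex.I_sq
  subst hA hp
  funext i
  fin_cases i
  · simp [mulVec, dotProduct, Fin.sum_univ_four, Pi.smul_apply]
    linear_combination (ω₀ : ℂ) ^ 2 * (5 + (μ₀ : ℂ)) * hI - (5 + (μ₀ : ℂ)) * hω2 - hc
  · simp [mulVec, dotProduct, Fin.sum_univ_four, Pi.smul_apply]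
    ring
  · simp [mulVec, dotProduct, Fin.sum_univ_four, Pi.smul_apply]
  · simp [mulVec, dotProduct, Fin.sum_univ_four, Pi.smul_apply]
    linear_combination 3 * (ω₀ : ℂ) ^ 2 * hI - 3 * hω2
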